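/- Let μ denote the Möbius function of the finite poset NC_n (noncrossing partitions of {1,…,n} ordered by refinement), whose bottom element 0̂ is the partition into singletons and whose top element 1̂ is the one-block partition. Then for every π ∈ NC_n, μ(0̂, π) = μ(π^c, 1̂). -/

import Mathlib

def IsNoncrossing {n : ℕ} (π : Finpartition (Finset.Icc 1 n)) : Prop :=
  ∀ i j k l : ℕ, i < j → j < k → k < l →
    ∀ B ∈ π.parts, ∀ B' ∈ π.parts, i ∈ B → k ∈ B → j ∈ B' → l ∈ B' → B = B'

/-- `i` and `j` lie in a common block of `π`. -/
def sameBlock {n : ℕ} (π : Finpartition (Finset.Icc 1 n)) (i j : ℕ) : Prop :=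
  ∃ B ∈ π.parts, i ∈ B ∧ j ∈ B

/-- The Kreweras relation of `π`: no block of `π` contains both an element of the
interval `{min i j + 1, …, max i j}` and an element of its complement. -/
def krewRel {n : ℕ} (π : Finpartition (Finset.Icc 1 n)) (i j : ℕ) : Prop :=
  ∀ B ∈ π.parts, (∃ a ∈ B, a ∈ Finset.Ioc (min i j) (max i j)) →
    B ⊆ Finset.Ioc (min i j) (max i j)

/-- Refinement order: every block of `σ` is contained in a block of `π`. -/
def refines {n : ℕ} (σ π : Finpartition (Finset.Icc 1 n)) : Prop :=
  ∀ B ∈ σ.parts, ∃ B' ∈ π.parts, B ⊆ B'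

namespace KW
open Finset

variable {n : ℕ}

lemma refines_iff_le (σ π : Finpartition (Finset.Icc 1 n)) : refines σ π ↔ σ ≤ π := Iff.rfl

/-- blocks of `π` respect the set `I`. -/
def respects {n : ℕ} (π : Finpartition (Finset.Icc 1 n)) (I : Finset ℕ) : Prop :=
  ∀ B ∈ π.parts, (∃ a ∈ B, a ∈ I) → B ⊆ I

lemma krewRel_iff (π : Finpartition (Finset.Icc 1 n)) (i j : ℕ) :
    krewRel π i j ↔ respects π (Finset.Ioc (min i j) (max i j)) := Iff.rfl

def krewRelI {n : ℕ} (π : Finpartition (Finset.Icc 1 n)) (i j : ℕ) : Prop :=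
  respects π (Finset.Ico (min i j) (max i j))

lemma respects_symmDiff {π : Finpartition (Finset.Icc 1 n)} {I J : Finset ℕ}
    (hI : respects π I) (hJ : respects π J) : respects π (symmDiff I J) := by
  classical
  intro B hB ⟨a, haB, haIJ⟩
  rw [Finset.mem_symmDiff] at haIJ
  have key : (B ⊆ I ∧ Disjoint B J) ∨ (B ⊆ J ∧ Disjoint B I) := by
    rcases haIJ with ⟨haI, haJ⟩ | ⟨haJ, haI⟩
    · refine Or.inl ⟨hI B hB ⟨a, haB, haI⟩, ?_⟩
      rw [Finset.disjoint_right]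
      intro x hxJ hxB
      exact haJ (hJ B hB ⟨x, hxB, hxJ⟩ haB)
    · refine Or.inr ⟨hJ B hB ⟨a, haB, haJ⟩, ?_⟩
      rw [Finset.disjoint_right]
      intro x hxI hxB
      exact haI (hI B hB ⟨x, hxB, hxI⟩ haB)
  intro x hxB
  rw [Finset.mem_symmDiff]
  rcases key with ⟨hBI, hd⟩ | ⟨hBJ, hd⟩
  · exact Or.inl ⟨hBI hxB, fun hxJ => (Finset.disjoint_left.mp hd hxB) hxJ⟩
  · exact Or.inr ⟨hBJ hxB, fun hxI => (Finset.disjoint_left.mp hd hxB) hxI⟩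

lemma respects_ground (π : Finpartition (Finset.Icc 1 n)) : respects π (Finset.Icc 1 n) :=
  fun B hB _ => π.le hB

lemma respects_congr {π : Finpartition (Finset.Icc 1 n)} {I J : Finset ℕ} (h : I = J) :
    respects π I → respects π J := by rintro hI; rwa [← h]

lemma krewRel_refl (π : Finpartition (Finset.Icc 1 n)) (a : ℕ) : krewRel π a a := by
  intro B hB ⟨x, hxB, hx⟩
  simp [Finset.mem_Ioc] at hx

lemma krewRel_symm {π : Finpartition (Finset.Icc 1 n)} {a b : ℕ} :
    krewRel π a b → krewRel π b a := by
  rw [krewRel_iff, krewRel_iff, min_comm, max_comm]; exact id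

lemma Ioc_symmDiff (a b c : ℕ) :
    Finset.Ioc (min a c) (max a c)
      = symmDiff (Finset.Ioc (min a b) (max a b)) (Finset.Ioc (min b c) (max b c)) := by
  ext x
  simp only [Finset.mem_symmDiff, Finset.mem_Ioc, lt_min_iff, min_lt_iff, le_max_iff, max_le_iff,
    not_and, not_le, not_lt, not_or]
  omega

lemma krewRel_trans {π : Finpartition (Finset.Icc 1 n)} {a b c : ℕ} :
    krewRel π a b → krewRel π b c → krewRel π a c := by
  rw [krewRel_iff, krewRel_iff, krewRel_iff]
  intro h1 h2
  exact respects_congr (Ioc_symmDiff a b c).symm (respects_symmDiff h1 h2)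

lemma krewRelI_refl (π : Finpartition (Finset.Icc 1 n)) (a : ℕ) : krewRelI π a a := by
  intro B hB ⟨x, hxB, hx⟩
  simp [Finset.mem_Ico] at hx

lemma krewRelI_symm {π : Finpartition (Finset.Icc 1 n)} {a b : ℕ} :
    krewRelI π a b → krewRelI π b a := by
  unfold krewRelI; rw [min_comm, max_comm]; exact id

lemma Ico_symmDiff (a b c : ℕ) :
    Finset.Ico (min a c) (max a c)
      = symmDiff (Finset.Ico (min a b) (max a b)) (Finset.Ico (min b c) (max b c)) := by
  ext x
  simp only [Finset.mem_symmDiff, Finset.mem_Ico, lt_min_iff, min_le_iff, le_max_iff, max_lt_iff,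
    not_and, not_le, not_lt, not_or]
  omega

lemma krewRelI_trans {π : Finpartition (Finset.Icc 1 n)} {a b c : ℕ} :
    krewRelI π a b → krewRelI π b c → krewRelI π a c := by
  unfold krewRelI
  intro h1 h2
  exact respects_congr (Ico_symmDiff a b c).symm (respects_symmDiff h1 h2)

end KW

namespace KW
open Finset
variable {n : ℕ}

open scoped Classical in
/-- partition into equivalence classes of a relation -/
noncomputable def ofRel (r : ℕ → ℕ → Prop)
    (hr : ∀ a ∈ Finset.Icc 1 n, r a a)
    (hs : ∀ a b, r a b → r b a)
    (ht : ∀ a b c, r a b → r b c → r a c) : Finpartition (Finset.Icc 1 n) where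
  parts := (Finset.Icc 1 n).image (fun a => (Finset.Icc 1 n).filter (r a))
  supIndep := by
    rw [Finset.supIndep_iff_pairwiseDisjoint]
    intro B hB C hC hBC
    simp only [coe_image, Set.mem_image, mem_coe] at hB hC
    obtain ⟨a, ha, rfl⟩ := hB
    obtain ⟨b, hb, rfl⟩ := hC
    rw [Function.onFun, Finset.disjoint_left]
    intro x hx hx'
    simp only [mem_filter, id] at hx hx'
    apply hBC
    ext y
    simp only [mem_filter, and_congr_right_iff]
    intro _
    constructor
    · intro hay; exact ht _ _ _ (ht _ _ _ hx'.2 (hs _ _ hx.2)) hay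
    · intro hby; exact ht _ _ _ (ht _ _ _ hx.2 (hs _ _ hx'.2)) hby
  sup_parts := by
    apply le_antisymm
    · rw [Finset.sup_le_iff]
      intro B hB
      simp only [mem_image] at hB
      obtain ⟨a, _, rfl⟩ := hB
      exact Finset.filter_subset _ _
    · intro x hx
      rw [Finset.mem_sup]
      exact ⟨_, Finset.mem_image_of_mem _ hx, by simp [Finset.mem_filter, hx, hr x hx]⟩
  bot_notMem := by
    simp only [bot_eq_empty, mem_image]
    rintro ⟨a, ha, h⟩
    have : a ∈ (Finset.Icc 1 n).filter (r a) := by simp [ha, hr a ha]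
    rw [h] at this
    exact absurd this (Finset.notMem_empty a)

open scoped Classical in
lemma mem_ofRel_iff {r : ℕ → ℕ → Prop} {hr hs ht} {B : Finset ℕ} :
    B ∈ (ofRel (n := n) r hr hs ht).parts ↔
      ∃ a ∈ Finset.Icc 1 n, B = (Finset.Icc 1 n).filter (r a) := by
  classical
  simp only [ofRel, Finset.mem_image]
  constructor
  · rintro ⟨a, ha, h⟩; exact ⟨a, ha, by convert h.symm using 2⟩
  · rintro ⟨a, ha, h⟩; exact ⟨a, ha, by convert h.symm using 2⟩

lemma sameBlock_ofRel_iff {r : ℕ → ℕ → Prop} {hr hs ht} {i j : ℕ} :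
    sameBlock (ofRel (n := n) r hr hs ht) i j ↔
      i ∈ Finset.Icc 1 n ∧ j ∈ Finset.Icc 1 n ∧ r i j := by
  classical
  constructor
  · rintro ⟨B, hB, hiB, hjB⟩
    rw [mem_ofRel_iff] at hB
    obtain ⟨a, ha, rfl⟩ := hB
    simp only [mem_filter] at hiB hjB
    exact ⟨hiB.1, hjB.1, ht _ _ _ (hs _ _ hiB.2) hjB.2⟩
  · rintro ⟨hi, hj, hij⟩
    refine ⟨(Finset.Icc 1 n).filter (r i), mem_ofRel_iff.mpr ⟨i, hi, rfl⟩, ?_, ?_⟩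
    · simp [hi, hr i hi]
    · simp [hj, hij]

/-- the Kreweras complement map -/
noncomputable def Kmap (σ : Finpartition (Finset.Icc 1 n)) : Finpartition (Finset.Icc 1 n) :=
  ofRel (krewRel σ) (fun a _ => krewRel_refl σ a) (fun _ _ => krewRel_symm)
    (fun _ _ _ => krewRel_trans)

/-- the inverse Kreweras complement map -/
noncomputable def KmapI (σ : Finpartition (Finset.Icc 1 n)) : Finpartition (Finset.Icc 1 n) :=
  ofRel (krewRelI σ) (fun a _ => krewRelI_refl σ a) (fun _ _ => krewRelI_symm)
    (fun _ _ _ => krewRelI_trans)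

lemma sameBlock_Kmap {σ : Finpartition (Finset.Icc 1 n)} {i j : ℕ} :
    sameBlock (Kmap σ) i j ↔ i ∈ Finset.Icc 1 n ∧ j ∈ Finset.Icc 1 n ∧ krewRel σ i j :=
  sameBlock_ofRel_iff

lemma sameBlock_KmapI {σ : Finpartition (Finset.Icc 1 n)} {i j : ℕ} :
    sameBlock (KmapI σ) i j ↔ i ∈ Finset.Icc 1 n ∧ j ∈ Finset.Icc 1 n ∧ krewRelI σ i j :=
  sameBlock_ofRel_iff

/-- two partitions with the same sameBlock relation on the ground set agree -/
lemma eq_of_sameBlock {P Q : Finpartition (Finset.Icc 1 n)}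
    (h : ∀ i ∈ Finset.Icc 1 n, ∀ j ∈ Finset.Icc 1 n, (sameBlock P i j ↔ sameBlock Q i j)) :
    P = Q := by
  classical
  ext B
  suffices key : ∀ P Q : Finpartition (Finset.Icc 1 n),
      (∀ i ∈ Finset.Icc 1 n, ∀ j ∈ Finset.Icc 1 n, (sameBlock P i j ↔ sameBlock Q i j)) →
      ∀ B ∈ P.parts, B ∈ Q.parts by
    constructor
    · exact fun hB => key P Q h B hB
    · exact fun hB => key Q P (fun i hi j hj => (h i hi j hj).symm) B hB
  intro P Q h B hB
  obtain ⟨a, haB⟩ := P.nonempty_of_mem_parts hB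
  have haS : a ∈ Finset.Icc 1 n := P.le hB haB
  have hBeq : B = Q.part a := by
    ext x
    constructor
    · intro hxB
      have hxS : x ∈ Finset.Icc 1 n := P.le hB hxB
      have : sameBlock Q a x := (h a haS x hxS).mp ⟨B, hB, haB, hxB⟩
      obtain ⟨C, hC, haC, hxC⟩ := this
      rwa [Q.part_eq_of_mem hC haC]
    · intro hx
      have hxS : x ∈ Finset.Icc 1 n := Q.le (Q.part_mem.mpr haS) hx
      have : sameBlock P a x :=
        (h a haS x hxS).mpr ⟨Q.part a, Q.part_mem.mpr haS, Q.mem_part haS, hx⟩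
      obtain ⟨C, hC, haC, hxC⟩ := this
      rwa [← P.eq_of_mem_parts hC hB haC haB]
  rw [hBeq]
  exact Q.part_mem.mpr haS

lemma subset_ground {σ : Finpartition (Finset.Icc 1 n)} {B : Finset ℕ} (hB : B ∈ σ.parts) :
    B ⊆ Finset.Icc 1 n := σ.le hB

lemma fwd_rt {σ : Finpartition (Finset.Icc 1 n)} {i j : ℕ} (hij : i < j)
    (hsb : sameBlock σ i j) :
    ∀ a, i ≤ a → a < j → ∀ b, krewRel σ a b → i ≤ b ∧ b < j := by
  obtain ⟨B, hB, hiB, hjB⟩ := hsb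
  intro a ha1 ha2 b hr
  rcases Nat.lt_trichotomy a b with h | h | h
  · refine ⟨by omega, ?_⟩
    by_contra hbj
    have hjI : j ∈ Finset.Ioc (min a b) (max a b) := by simp [Finset.mem_Ioc]; omega
    have := hr B hB ⟨j, hjB, hjI⟩ hiB
    simp [Finset.mem_Ioc] at this
    omega
  · omega
  · refine ⟨?_, by omega⟩
    by_contra hbi
    have hiI : i ∈ Finset.Ioc (min a b) (max a b) := by simp [Finset.mem_Ioc]; omega
    have := hr B hB ⟨i, hiB, hiI⟩ hjB
    simp [Finset.mem_Ioc] at this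
    omega

lemma fwd_lt {σ : Finpartition (Finset.Icc 1 n)} {i j : ℕ} (hij : i < j)
    (hsb : sameBlock σ i j) :
    ∀ a, i < a → a ≤ j → ∀ b, krewRelI σ a b → i < b ∧ b ≤ j := by
  obtain ⟨B, hB, hiB, hjB⟩ := hsb
  intro a ha1 ha2 b hr
  rcases Nat.lt_trichotomy a b with h | h | h
  · refine ⟨by omega, ?_⟩
    by_contra hbj
    have hjI : j ∈ Finset.Ico (min a b) (max a b) := by simp [Finset.mem_Ico]; omega
    have := hr B hB ⟨j, hjB, hjI⟩ hiB
    simp [Finset.mem_Ico] at this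
    omega
  · omega
  · refine ⟨?_, by omega⟩
    by_contra hbi
    have hiI : i ∈ Finset.Ico (min a b) (max a b) := by simp [Finset.mem_Ico]; omega
    have := hr B hB ⟨i, hiB, hiI⟩ hjB
    simp [Finset.mem_Ico] at this
    omega


lemma core_rt {σ : Finpartition (Finset.Icc 1 n)} (hnc : IsNoncrossing σ)
    {i j : ℕ} (hi : 1 ≤ i) (hij : i < j) (hj : j ≤ n)
    (A : ∀ a, i ≤ a → a < j → ∀ b ∈ Finset.Icc 1 n, krewRel σ a b → i ≤ b ∧ b < j) :
    sameBlock σ i j := by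
  classical
  have hiS : i ∈ Finset.Icc 1 n := by simp [Finset.mem_Icc]; omega
  set B := σ.part i with hBdef
  have hB : B ∈ σ.parts := σ.part_mem.mpr hiS
  have hiB : i ∈ B := σ.mem_part hiS
  have hBS : B ⊆ Finset.Icc 1 n := subset_ground hB
  suffices walk : ∀ d q, q ∈ B → i ≤ q → q < j → j - q ≤ d → j ∈ B by
    exact ⟨B, hB, hiB, walk (j - i) i hiB le_rfl hij le_rfl⟩
  intro d
  induction d with
  | zero => intro q _ _ h1 h2; omega
  | succ d ih =>
    intro q hqB hiq hqj hd
    have hqn : q ≤ n := by omega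
    by_cases hS : ∃ y ∈ B, q < y
    · -- there is an element of B above q
      have hFne : (B.filter (fun y => q < y)).Nonempty := by
        obtain ⟨y, hy, hqy⟩ := hS
        exact ⟨y, Finset.mem_filter.mpr ⟨hy, hqy⟩⟩
      set q' := (B.filter (fun y => q < y)).min' hFne with hq'def
      have hq'F := (B.filter (fun y => q < y)).min'_mem hFne
      rw [Finset.mem_filter] at hq'F
      obtain ⟨hq'B, hqq'⟩ := hq'F
      have hmin : ∀ y ∈ B, q < y → q' ≤ y := fun y hy h =>
        Finset.min'_le _ y (Finset.mem_filter.mpr ⟨hy, h⟩)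
      have hq'n : q' ≤ n := by
        have := hBS hq'B; simp [Finset.mem_Icc] at this; omega
      have hresp : respects σ (Finset.Ioc q (q' - 1)) := by
        intro C hC hmeet
        obtain ⟨x, hxC, hxI⟩ := hmeet
        rw [Finset.mem_Ioc] at hxI
        have hxq' : x < q' := by omega
        have hxB : x ∉ B := fun h => by have := hmin x h hxI.1; omega
        have hCB : C ≠ B := fun h => hxB (h ▸ hxC)
        intro y hyC
        rw [Finset.mem_Ioc]
        have hyq : y ≠ q := fun h => hCB (σ.eq_of_mem_parts hC hB (by rwa [h] at hyC) hqB)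
        have hyq' : y ≠ q' := fun h => hCB (σ.eq_of_mem_parts hC hB (by rwa [h] at hyC) hq'B)
        rcases Nat.lt_trichotomy y q with h | h | h
        · exact absurd (hnc y q x q' h hxI.1 hxq' C hC B hB hyC hxC hqB hq'B) hCB
        · omega
        · by_cases hle : y ≤ q' - 1
          · exact ⟨h, hle⟩
          · have hq'y : q' < y := by omega
            exact absurd (hnc q x q' y hxI.1 hxq' hq'y B hB C hC hqB hq'B hxC hyC)
              (fun he => hCB he.symm)
      have hq'j : q' ≤ j := by
        by_cases h1 : q + 1 = q'
        · omega
        · have hq1 : q < q' - 1 := by omega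
          have hkr : krewRel σ q (q' - 1) := by
            rw [krewRel_iff, min_eq_left (by omega : q ≤ q' - 1),
              max_eq_right (by omega : q ≤ q' - 1)]
            exact hresp
          have := A q hiq hqj (q' - 1) (by simp [Finset.mem_Icc]; omega) hkr
          omega
      rcases eq_or_lt_of_le hq'j with h | h
      · rwa [← h]
      · exact ih q' hq'B (by omega) h (by omega)
    · -- q is the maximum of B
      push_neg at hS
      set m := B.min' ⟨i, hiB⟩ with hmdef
      have hmB : m ∈ B := B.min'_mem _
      have hm_le : ∀ y ∈ B, m ≤ y := fun y hy => B.min'_le y hy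
      have hmi : m ≤ i := hm_le i hiB
      have hm1 : 1 ≤ m := by
        have := hBS hmB; simp [Finset.mem_Icc] at this; omega
      have hresp : respects σ (Finset.Ioc (m - 1) q) := by
        intro C hC hmeet
        obtain ⟨x, hxC, hxI⟩ := hmeet
        rw [Finset.mem_Ioc] at hxI
        by_cases hCB : C = B
        · subst hCB
          intro y hyC
          rw [Finset.mem_Ioc]
          have h1 := hm_le y hyC
          have h2 := hS y hyC
          omega
        · have hxB : x ∉ B := fun h => hCB (σ.eq_of_mem_parts hC hB hxC h)
          have hxm : m < x := by
            rcases Nat.lt_trichotomy x m with h | h | h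
            · omega
            · exact absurd hmB (fun hh => hxB (by rwa [h]))
            · exact h
          have hxq : x < q := by
            rcases Nat.lt_trichotomy x q with h | h | h
            · exact h
            · exact absurd hqB (fun hh => hxB (by rwa [h]))
            · omega
          intro y hyC
          rw [Finset.mem_Ioc]
          have hym : y ≠ m := fun h => hCB (σ.eq_of_mem_parts hC hB (by rwa [h] at hyC) hmB)
          have hyq : y ≠ q := fun h => hCB (σ.eq_of_mem_parts hC hB (by rwa [h] at hyC) hqB)
          rcases Nat.lt_trichotomy y m with h | h | h
          · exact absurd (hnc y m x q h hxm hxq C hC B hB hyC hxC hmB hqB) hCB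
          · omega
          · by_cases hyq2 : y < q
            · omega
            · have hqy : q < y := by omega
              exact absurd (hnc m x q y hxm hxq hqy B hB C hC hmB hqB hxC hyC)
                (fun he => hCB he.symm)
      by_cases hm2 : 2 ≤ m
      · have hkr : krewRel σ q (m - 1) := by
          rw [krewRel_iff, min_eq_right (by omega : m - 1 ≤ q),
            max_eq_left (by omega : m - 1 ≤ q)]
          exact hresp
        have := A q hiq hqj (m - 1) (by simp [Finset.mem_Icc]; omega) hkr
        omega
      · -- m = 1
        have hm1' : m = 1 := by omega
        have hresp0 : respects σ (Finset.Ioc 0 q) := by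
          rw [hm1'] at hresp; simpa using hresp
        have hrespg : respects σ (Finset.Ioc 0 n) := by
          refine respects_congr ?_ (respects_ground σ)
          ext x; simp [Finset.mem_Icc, Finset.mem_Ioc]; omega
        have hresp2 : respects σ (Finset.Ioc q n) := by
          refine respects_congr ?_ (respects_symmDiff hresp0 hrespg)
          ext x
          simp only [Finset.mem_symmDiff, Finset.mem_Ioc, not_and, not_le]
          omega
        have hkr : krewRel σ q n := by
          rw [krewRel_iff, min_eq_left (by omega : q ≤ n), max_eq_right (by omega : q ≤ n)]
          exact hresp2
        have := A q hiq hqj n (by simp [Finset.mem_Icc]; omega) hkr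
        omega


lemma core_lt {σ : Finpartition (Finset.Icc 1 n)} (hnc : IsNoncrossing σ)
    {i j : ℕ} (hi : 1 ≤ i) (hij : i < j) (hj : j ≤ n)
    (A : ∀ a, i < a → a ≤ j → ∀ b ∈ Finset.Icc 1 n, krewRelI σ a b → i < b ∧ b ≤ j) :
    sameBlock σ i j := by
  classical
  have hjS : j ∈ Finset.Icc 1 n := by simp [Finset.mem_Icc]; omega
  set B := σ.part j with hBdef
  have hB : B ∈ σ.parts := σ.part_mem.mpr hjS
  have hjB : j ∈ B := σ.mem_part hjS
  have hBS : B ⊆ Finset.Icc 1 n := subset_ground hB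
  suffices walk : ∀ d q, q ∈ B → i < q → q ≤ j → q - i ≤ d → i ∈ B by
    exact ⟨B, hB, walk (j - i) j hjB hij le_rfl le_rfl, hjB⟩
  intro d
  induction d with
  | zero => intro q _ h1 _ h2; omega
  | succ d ih =>
    intro q hqB hiq hqj hd
    have hq1 : 1 ≤ q := by omega
    by_cases hS : ∃ y ∈ B, y < q
    · -- there is an element of B below q
      have hFne : (B.filter (fun y => y < q)).Nonempty := by
        obtain ⟨y, hy, hqy⟩ := hS
        exact ⟨y, Finset.mem_filter.mpr ⟨hy, hqy⟩⟩
      set q' := (B.filter (fun y => y < q)).max' hFne with hq'def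
      have hq'F := (B.filter (fun y => y < q)).max'_mem hFne
      rw [Finset.mem_filter] at hq'F
      obtain ⟨hq'B, hqq'⟩ := hq'F
      have hmax : ∀ z ∈ B, z < q → z ≤ q' := by
        intro z hz h
        have hm : z ∈ B.filter (fun y => y < q) := Finset.mem_filter.mpr ⟨hz, h⟩
        exact Finset.le_max' _ z hm
      have hq'1 : 1 ≤ q' := by
        have := hBS hq'B; simp [Finset.mem_Icc] at this; omega
      have hresp : respects σ (Finset.Ico (q' + 1) q) := by
        intro C hC hmeet
        obtain ⟨x, hxC, hxI⟩ := hmeet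
        rw [Finset.mem_Ico] at hxI
        have hq'x : q' < x := by omega
        have hxB : x ∉ B := fun h => by have := hmax x h hxI.2; omega
        have hCB : C ≠ B := fun h => hxB (h ▸ hxC)
        intro y hyC
        rw [Finset.mem_Ico]
        have hyq : y ≠ q := fun h => hCB (σ.eq_of_mem_parts hC hB (by rwa [h] at hyC) hqB)
        have hyq' : y ≠ q' := fun h => hCB (σ.eq_of_mem_parts hC hB (by rwa [h] at hyC) hq'B)
        rcases Nat.lt_trichotomy y q' with h | h | h
        · exact absurd (hnc y q' x q h hq'x hxI.2 C hC B hB hyC hxC hq'B hqB) hCB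
        · omega
        · by_cases hle : y < q
          · omega
          · have hqy : q < y := by omega
            exact absurd (hnc q' x q y hq'x hxI.2 hqy B hB C hC hq'B hqB hxC hyC)
              (fun he => hCB he.symm)
      have hiq' : i ≤ q' := by
        by_cases h1 : q' + 1 = q
        · omega
        · have hq1' : q' + 1 < q := by omega
          have hkr : krewRelI σ (q' + 1) q := by
            unfold krewRelI
            rw [min_eq_left (by omega : q' + 1 ≤ q), max_eq_right (by omega : q' + 1 ≤ q)]
            exact hresp
          have := A q hiq hqj (q' + 1) (by simp [Finset.mem_Icc]; omega) (krewRelI_symm hkr)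
          omega
      rcases eq_or_lt_of_le hiq' with h | h
      · rwa [h]
      · exact ih q' hq'B h (by omega) (by omega)
    · -- q is the minimum of B
      push_neg at hS
      set M := B.max' ⟨j, hjB⟩ with hMdef
      have hMB : M ∈ B := B.max'_mem _
      have hM_ge : ∀ y ∈ B, y ≤ M := fun y hy => B.le_max' y hy
      have hMj : j ≤ M := hM_ge j hjB
      have hMn : M ≤ n := by
        have := hBS hMB; simp [Finset.mem_Icc] at this; omega
      have hresp : respects σ (Finset.Ico q (M + 1)) := by
        intro C hC hmeet
        obtain ⟨x, hxC, hxI⟩ := hmeet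
        rw [Finset.mem_Ico] at hxI
        by_cases hCB : C = B
        · subst hCB
          intro y hyC
          rw [Finset.mem_Ico]
          have h1 := hM_ge y hyC
          have h2 := hS y hyC
          omega
        · have hxB : x ∉ B := fun h => hCB (σ.eq_of_mem_parts hC hB hxC h)
          have hqx : q < x := by
            have hxq : x ≠ q := fun h => hxB (by rw [h]; exact hqB)
            omega
          have hxM : x < M := by
            rcases Nat.lt_trichotomy x M with h | h | h
            · exact h
            · exact absurd hMB (fun hh => hxB (by rw [h]; exact hMB))
            · omega
          intro y hyC
          rw [Finset.mem_Ico]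
          have hyM : y ≠ M := fun h => hCB (σ.eq_of_mem_parts hC hB (by rwa [h] at hyC) hMB)
          have hyq : y ≠ q := fun h => hCB (σ.eq_of_mem_parts hC hB (by rwa [h] at hyC) hqB)
          rcases Nat.lt_trichotomy y q with h | h | h
          · exact absurd (hnc y q x M h hqx hxM C hC B hB hyC hxC hqB hMB) hCB
          · omega
          · by_cases hyM2 : y ≤ M
            · omega
            · have hMy : M < y := by omega
              exact absurd (hnc q x M y hqx hxM hMy B hB C hC hqB hMB hxC hyC)
                (fun he => hCB he.symm)
      by_cases hMn2 : M < n
      · have hkr : krewRelI σ q (M + 1) := by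
          unfold krewRelI
          rw [min_eq_left (by omega : q ≤ M + 1), max_eq_right (by omega : q ≤ M + 1)]
          exact hresp
        have := A q hiq hqj (M + 1) (by simp [Finset.mem_Icc]; omega) hkr
        omega
      · -- M = n
        have hMn' : M = n := by omega
        have hresp0 : respects σ (Finset.Ico q (n + 1)) := by
          rw [hMn'] at hresp; exact hresp
        have hrespg : respects σ (Finset.Ico 1 (n + 1)) := by
          refine respects_congr ?_ (respects_ground σ)
          ext x; simp [Finset.mem_Icc, Finset.mem_Ico]
        have hresp2 : respects σ (Finset.Ico 1 q) := by
          refine respects_congr ?_ (respects_symmDiff hresp0 hrespg)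
          ext x
          simp only [Finset.mem_symmDiff, Finset.mem_Ico, not_and, not_le, not_lt]
          omega
        have hq2 : 1 < q := by omega
        have hkr : krewRelI σ q 1 := by
          unfold krewRelI
          rw [min_eq_right (by omega : 1 ≤ q), max_eq_left (by omega : 1 ≤ q)]
          exact hresp2
        have := A q hiq hqj 1 (by simp [Finset.mem_Icc]; omega) hkr
        omega


lemma krewRel_lt_iff {σ : Finpartition (Finset.Icc 1 n)} {i j : ℕ} (h : i < j) :
    krewRel σ i j ↔ respects σ (Finset.Ioc i j) := by
  rw [krewRel_iff, min_eq_left h.le, max_eq_right h.le]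

lemma krewRelI_lt_iff {σ : Finpartition (Finset.Icc 1 n)} {i j : ℕ} (h : i < j) :
    krewRelI σ i j ↔ respects σ (Finset.Ico i j) := by
  unfold krewRelI
  rw [min_eq_left h.le, max_eq_right h.le]

lemma Kmap_noncrossing (σ : Finpartition (Finset.Icc 1 n)) : IsNoncrossing (Kmap σ) := by
  intro i j k l hij hjk hkl B hB C hC hiB hkB hjC hlC
  have hik : krewRel σ i k := (sameBlock_Kmap.mp ⟨B, hB, hiB, hkB⟩).2.2
  have hjl : krewRel σ j l := (sameBlock_Kmap.mp ⟨C, hC, hjC, hlC⟩).2.2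
  rw [krewRel_lt_iff (hij.trans hjk)] at hik
  rw [krewRel_lt_iff (hjk.trans hkl)] at hjl
  have hrij : krewRel σ i j := by
    rw [krewRel_lt_iff hij]
    intro D hD hmeet
    obtain ⟨x, hxD, hxI⟩ := hmeet
    rw [Finset.mem_Ioc] at hxI
    have hDik : D ⊆ Finset.Ioc i k :=
      hik D hD ⟨x, hxD, Finset.mem_Ioc.mpr ⟨hxI.1, by omega⟩⟩
    have hDjl : ∀ y ∈ D, y ∉ Finset.Ioc j l := by
      intro y hyD hy
      have : D ⊆ Finset.Ioc j l := hjl D hD ⟨y, hyD, hy⟩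
      have := this hxD
      rw [Finset.mem_Ioc] at this
      omega
    intro y hyD
    have h1 := hDik hyD
    have h2 := hDjl y hyD
    rw [Finset.mem_Ioc] at h1 ⊢
    rw [Finset.mem_Ioc] at h2
    omega
  have hiS : i ∈ Finset.Icc 1 n := (Kmap σ).le hB hiB
  have hjS : j ∈ Finset.Icc 1 n := (Kmap σ).le hC hjC
  have hsb : sameBlock (Kmap σ) i j := by
    rw [sameBlock_Kmap]
    exact ⟨hiS, hjS, hrij⟩
  obtain ⟨D, hD, hiD, hjD⟩ := hsb
  rw [(Kmap σ).eq_of_mem_parts hB hD hiB hiD, (Kmap σ).eq_of_mem_parts hC hD hjC hjD]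

lemma KmapI_noncrossing (σ : Finpartition (Finset.Icc 1 n)) : IsNoncrossing (KmapI σ) := by
  intro i j k l hij hjk hkl B hB C hC hiB hkB hjC hlC
  have hik : krewRelI σ i k := (sameBlock_KmapI.mp ⟨B, hB, hiB, hkB⟩).2.2
  have hjl : krewRelI σ j l := (sameBlock_KmapI.mp ⟨C, hC, hjC, hlC⟩).2.2
  rw [krewRelI_lt_iff (hij.trans hjk)] at hik
  rw [krewRelI_lt_iff (hjk.trans hkl)] at hjl
  have hrkl : krewRelI σ k l := by
    rw [krewRelI_lt_iff hkl]
    intro D hD hmeet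
    obtain ⟨x, hxD, hxI⟩ := hmeet
    rw [Finset.mem_Ico] at hxI
    have hDjl : D ⊆ Finset.Ico j l :=
      hjl D hD ⟨x, hxD, Finset.mem_Ico.mpr ⟨by omega, hxI.2⟩⟩
    have hDik : ∀ y ∈ D, y ∉ Finset.Ico i k := by
      intro y hyD hy
      have : D ⊆ Finset.Ico i k := hik D hD ⟨y, hyD, hy⟩
      have := this hxD
      rw [Finset.mem_Ico] at this
      omega
    intro y hyD
    have h1 := hDjl hyD
    have h2 := hDik y hyD
    rw [Finset.mem_Ico] at h1 ⊢
    rw [Finset.mem_Ico] at h2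
    omega
  have hkS : k ∈ Finset.Icc 1 n := (KmapI σ).le hB hkB
  have hlS : l ∈ Finset.Icc 1 n := (KmapI σ).le hC hlC
  have hsb : sameBlock (KmapI σ) k l := by
    rw [sameBlock_KmapI]
    exact ⟨hkS, hlS, hrkl⟩
  obtain ⟨D, hD, hkD, hlD⟩ := hsb
  rw [(KmapI σ).eq_of_mem_parts hB hD hkB hkD, (KmapI σ).eq_of_mem_parts hC hD hlC hlD]

lemma krewRel_mono {σ τ : Finpartition (Finset.Icc 1 n)} (h : σ ≤ τ) {a b : ℕ} :
    krewRel τ a b → krewRel σ a b := by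
  intro hr B hB hmeet
  obtain ⟨x, hxB, hxI⟩ := hmeet
  obtain ⟨B', hB', hBB'⟩ := h hB
  have : B' ⊆ Finset.Ioc (min a b) (max a b) := hr B' hB' ⟨x, hBB' hxB, hxI⟩
  exact fun y hy => this (hBB' hy)

lemma krewRelI_mono' {σ τ : Finpartition (Finset.Icc 1 n)} (h : σ ≤ τ) {a b : ℕ} :
    krewRelI τ a b → krewRelI σ a b := by
  intro hr B hB hmeet
  obtain ⟨x, hxB, hxI⟩ := hmeet
  obtain ⟨B', hB', hBB'⟩ := h hB
  have : B' ⊆ Finset.Ico (min a b) (max a b) := hr B' hB' ⟨x, hBB' hxB, hxI⟩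
  exact fun y hy => this (hBB' hy)

lemma Kmap_antitone {σ τ : Finpartition (Finset.Icc 1 n)} (h : σ ≤ τ) : Kmap τ ≤ Kmap σ := by
  classical
  intro C hC
  unfold Kmap at hC ⊢
  rw [mem_ofRel_iff] at hC
  obtain ⟨a, ha, rfl⟩ := hC
  refine ⟨(Finset.Icc 1 n).filter (krewRel σ a), mem_ofRel_iff.mpr ⟨a, ha, rfl⟩, ?_⟩
  intro x hx
  rw [Finset.mem_filter] at hx ⊢
  exact ⟨hx.1, krewRel_mono h hx.2⟩

lemma KmapI_antitone {σ τ : Finpartition (Finset.Icc 1 n)} (h : σ ≤ τ) : KmapI τ ≤ KmapI σ := by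
  classical
  intro C hC
  unfold KmapI at hC ⊢
  rw [mem_ofRel_iff] at hC
  obtain ⟨a, ha, rfl⟩ := hC
  refine ⟨(Finset.Icc 1 n).filter (krewRelI σ a), mem_ofRel_iff.mpr ⟨a, ha, rfl⟩, ?_⟩
  intro x hx
  rw [Finset.mem_filter] at hx ⊢
  exact ⟨hx.1, krewRelI_mono' h hx.2⟩


lemma sameBlock_symm {σ : Finpartition (Finset.Icc 1 n)} {i j : ℕ} :
    sameBlock σ i j → sameBlock σ j i := by
  rintro ⟨B, hB, h1, h2⟩; exact ⟨B, hB, h2, h1⟩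

lemma sameBlock_refl {σ : Finpartition (Finset.Icc 1 n)} {i : ℕ} (hi : i ∈ Finset.Icc 1 n) :
    sameBlock σ i i := by
  obtain ⟨B, hB, hiB⟩ := σ.exists_mem hi
  exact ⟨B, hB, hiB, hiB⟩

lemma krewRelI_Kmap_iff {σ : Finpartition (Finset.Icc 1 n)} (hnc : IsNoncrossing σ)
    {i j : ℕ} (hi : i ∈ Finset.Icc 1 n) (hj : j ∈ Finset.Icc 1 n) :
    krewRelI (Kmap σ) i j ↔ sameBlock σ i j := by
  classical
  rw [Finset.mem_Icc] at hi hj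
  suffices key : ∀ i j : ℕ, 1 ≤ i → j ≤ n → i < j → (krewRelI (Kmap σ) i j ↔ sameBlock σ i j) by
    rcases Nat.lt_trichotomy i j with h | h | h
    · exact key i j (by omega) (by omega) h
    · subst h
      constructor
      · intro _; exact sameBlock_refl (by simp [Finset.mem_Icc]; omega)
      · intro _; exact krewRelI_refl _ _
    · constructor
      · intro hr; exact sameBlock_symm ((key j i (by omega) (by omega) h).mp (krewRelI_symm hr))
      · intro hsb; exact krewRelI_symm ((key j i (by omega) (by omega) h).mpr (sameBlock_symm hsb))
  clear hi hj i j
  intro i j hi hj hij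
  constructor
  · intro h
    rw [krewRelI_lt_iff hij] at h
    refine core_rt hnc hi hij hj ?_
    intro a ha1 ha2 b hb hr
    have haS : a ∈ Finset.Icc 1 n := by simp [Finset.mem_Icc]; omega
    have hCa : (Finset.Icc 1 n).filter (krewRel σ a) ∈ (Kmap σ).parts := by
      unfold Kmap; exact mem_ofRel_iff.mpr ⟨a, haS, rfl⟩
    have hsub : (Finset.Icc 1 n).filter (krewRel σ a) ⊆ Finset.Ico i j := by
      refine h _ hCa ⟨a, ?_, ?_⟩
      · simp [Finset.mem_filter, haS, krewRel_refl σ a]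
      · rw [Finset.mem_Ico]; omega
    have hbmem : b ∈ (Finset.Icc 1 n).filter (krewRel σ a) := by
      rw [Finset.mem_filter]; exact ⟨hb, hr⟩
    have := hsub hbmem
    rw [Finset.mem_Ico] at this
    omega
  · intro hsb
    rw [krewRelI_lt_iff hij]
    intro C hC hmeet
    obtain ⟨x, hxC, hxI⟩ := hmeet
    rw [Finset.mem_Ico] at hxI
    unfold Kmap at hC
    rw [mem_ofRel_iff] at hC
    obtain ⟨a, ha, rfl⟩ := hC
    rw [Finset.mem_filter] at hxC
    intro y hyC
    rw [Finset.mem_filter] at hyC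
    have hxy : krewRel σ x y := krewRel_trans (krewRel_symm hxC.2) hyC.2
    have := fwd_rt hij hsb x hxI.1 hxI.2 y hxy
    rw [Finset.mem_Ico]
    omega

lemma krewRel_KmapI_iff {σ : Finpartition (Finset.Icc 1 n)} (hnc : IsNoncrossing σ)
    {i j : ℕ} (hi : i ∈ Finset.Icc 1 n) (hj : j ∈ Finset.Icc 1 n) :
    krewRel (KmapI σ) i j ↔ sameBlock σ i j := by
  classical
  rw [Finset.mem_Icc] at hi hj
  suffices key : ∀ i j : ℕ, 1 ≤ i → j ≤ n → i < j → (krewRel (KmapI σ) i j ↔ sameBlock σ i j) by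
    rcases Nat.lt_trichotomy i j with h | h | h
    · exact key i j (by omega) (by omega) h
    · subst h
      constructor
      · intro _; exact sameBlock_refl (by simp [Finset.mem_Icc]; omega)
      · intro _; exact krewRel_refl _ _
    · constructor
      · intro hr; exact sameBlock_symm ((key j i (by omega) (by omega) h).mp (krewRel_symm hr))
      · intro hsb; exact krewRel_symm ((key j i (by omega) (by omega) h).mpr (sameBlock_symm hsb))
  clear hi hj i j
  intro i j hi hj hij
  constructor
  · intro h
    rw [krewRel_lt_iff hij] at h
    refine core_lt hnc hi hij hj ?_
    intro a ha1 ha2 b hb hr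
    have haS : a ∈ Finset.Icc 1 n := by simp [Finset.mem_Icc]; omega
    have hCa : (Finset.Icc 1 n).filter (krewRelI σ a) ∈ (KmapI σ).parts := by
      unfold KmapI; exact mem_ofRel_iff.mpr ⟨a, haS, rfl⟩
    have hsub : (Finset.Icc 1 n).filter (krewRelI σ a) ⊆ Finset.Ioc i j := by
      refine h _ hCa ⟨a, ?_, ?_⟩
      · simp [Finset.mem_filter, haS, krewRelI_refl σ a]
      · rw [Finset.mem_Ioc]; omega
    have hbmem : b ∈ (Finset.Icc 1 n).filter (krewRelI σ a) := by
      rw [Finset.mem_filter]; exact ⟨hb, hr⟩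
    have := hsub hbmem
    rw [Finset.mem_Ioc] at this
    omega
  · intro hsb
    rw [krewRel_lt_iff hij]
    intro C hC hmeet
    obtain ⟨x, hxC, hxI⟩ := hmeet
    rw [Finset.mem_Ioc] at hxI
    unfold KmapI at hC
    rw [mem_ofRel_iff] at hC
    obtain ⟨a, ha, rfl⟩ := hC
    rw [Finset.mem_filter] at hxC
    intro y hyC
    rw [Finset.mem_filter] at hyC
    have hxy : krewRelI σ x y := krewRelI_trans (krewRelI_symm hxC.2) hyC.2
    have := fwd_lt hij hsb x hxI.1 hxI.2 y hxy
    rw [Finset.mem_Ioc]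
    omega

lemma KmapI_Kmap {σ : Finpartition (Finset.Icc 1 n)} (hnc : IsNoncrossing σ) :
    KmapI (Kmap σ) = σ := by
  refine eq_of_sameBlock ?_
  intro i hi j hj
  rw [sameBlock_KmapI]
  constructor
  · rintro ⟨_, _, h⟩; exact (krewRelI_Kmap_iff hnc hi hj).mp h
  · intro h; exact ⟨hi, hj, (krewRelI_Kmap_iff hnc hi hj).mpr h⟩

lemma Kmap_KmapI {σ : Finpartition (Finset.Icc 1 n)} (hnc : IsNoncrossing σ) :
    Kmap (KmapI σ) = σ := by
  refine eq_of_sameBlock ?_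
  intro i hi j hj
  rw [sameBlock_Kmap]
  constructor
  · rintro ⟨_, _, h⟩; exact (krewRel_KmapI_iff hnc hi hj).mp h
  · intro h; exact ⟨hi, hj, (krewRel_KmapI_iff hnc hi hj).mpr h⟩


section BotTop
variable {bot top : Finpartition (Finset.Icc 1 n)}

lemma nc_bot (hbot : bot.parts = (Finset.Icc 1 n).image (fun i => {i})) : IsNoncrossing bot := by
  intro i j k l hij hjk hkl B hB B' hB' hiB hkB _ _
  rw [hbot, Finset.mem_image] at hB
  obtain ⟨a, _, rfl⟩ := hB
  rw [Finset.mem_singleton] at hiB hkB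
  omega

lemma nc_top (htop : top.parts = {Finset.Icc 1 n}) : IsNoncrossing top := by
  intro i j k l hij hjk hkl B hB B' hB' _ _ _ _
  rw [htop, Finset.mem_singleton] at hB hB'
  rw [hB, hB']

lemma bot_le_all (hbot : bot.parts = (Finset.Icc 1 n).image (fun i => {i}))
    (ρ : Finpartition (Finset.Icc 1 n)) : bot ≤ ρ := by
  intro B hB
  rw [hbot, Finset.mem_image] at hB
  obtain ⟨a, ha, rfl⟩ := hB
  obtain ⟨C, hC, haC⟩ := ρ.exists_mem ha
  exact ⟨C, hC, by simpa using haC⟩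

lemma all_le_top (htop : top.parts = {Finset.Icc 1 n})
    (ρ : Finpartition (Finset.Icc 1 n)) : ρ ≤ top := by
  intro B hB
  exact ⟨Finset.Icc 1 n, by rw [htop]; exact Finset.mem_singleton_self _, ρ.le hB⟩

lemma sameBlock_bot_iff (hbot : bot.parts = (Finset.Icc 1 n).image (fun i => {i})) {i j : ℕ} :
    sameBlock bot i j ↔ i = j ∧ i ∈ Finset.Icc 1 n := by
  constructor
  · rintro ⟨B, hB, hiB, hjB⟩
    rw [hbot, Finset.mem_image] at hB
    obtain ⟨a, ha, rfl⟩ := hB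
    rw [Finset.mem_singleton] at hiB hjB
    subst hiB; subst hjB
    exact ⟨rfl, ha⟩
  · rintro ⟨rfl, hi⟩
    exact ⟨{i}, by rw [hbot]; exact Finset.mem_image_of_mem _ hi, Finset.mem_singleton_self i,
      Finset.mem_singleton_self i⟩

lemma sameBlock_top_iff (htop : top.parts = {Finset.Icc 1 n}) {i j : ℕ} :
    sameBlock top i j ↔ i ∈ Finset.Icc 1 n ∧ j ∈ Finset.Icc 1 n := by
  constructor
  · rintro ⟨B, hB, hiB, hjB⟩
    rw [htop, Finset.mem_singleton] at hB
    subst hB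
    exact ⟨hiB, hjB⟩
  · rintro ⟨hi, hj⟩
    exact ⟨Finset.Icc 1 n, by rw [htop]; exact Finset.mem_singleton_self _, hi, hj⟩

lemma Kmap_bot (hbot : bot.parts = (Finset.Icc 1 n).image (fun i => {i}))
    (htop : top.parts = {Finset.Icc 1 n}) : Kmap bot = top := by
  refine eq_of_sameBlock ?_
  intro i hi j hj
  rw [sameBlock_Kmap, sameBlock_top_iff htop]
  constructor
  · rintro ⟨_, _, _⟩; exact ⟨hi, hj⟩
  · rintro ⟨_, _⟩
    refine ⟨hi, hj, ?_⟩
    intro B hB hmeet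
    rw [hbot, Finset.mem_image] at hB
    obtain ⟨a, ha, rfl⟩ := hB
    obtain ⟨x, hxB, hxI⟩ := hmeet
    rw [Finset.mem_singleton] at hxB
    subst hxB
    intro y hy
    rw [Finset.mem_singleton] at hy
    subst hy
    exact hxI

lemma KmapI_top (hn : 1 ≤ n) (hbot : bot.parts = (Finset.Icc 1 n).image (fun i => {i}))
    (htop : top.parts = {Finset.Icc 1 n}) : KmapI top = bot := by
  refine eq_of_sameBlock ?_
  intro i hi j hj
  rw [sameBlock_KmapI, sameBlock_bot_iff hbot]
  constructor
  · rintro ⟨_, _, h⟩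
    refine ⟨?_, hi⟩
    by_contra hij
    have hIcc : Finset.Icc 1 n ∈ top.parts := by rw [htop]; exact Finset.mem_singleton_self _
    have hminS : min i j ∈ Finset.Icc 1 n := by
      rw [Finset.mem_Icc] at hi hj ⊢; omega
    have hminI : min i j ∈ Finset.Ico (min i j) (max i j) := by
      rw [Finset.mem_Ico]; omega
    have := h _ hIcc ⟨min i j, hminS, hminI⟩
    have hnmem : n ∈ Finset.Icc 1 n := by rw [Finset.mem_Icc]; omega
    have := this hnmem
    rw [Finset.mem_Ico] at this
    rw [Finset.mem_Icc] at hi hj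
    omega
  · rintro ⟨rfl, _⟩
    exact ⟨hi, hi, krewRelI_refl top i⟩

end BotTop

open scoped Classical in
lemma finsum_eq_subtype_sum (q : Finpartition (Finset.Icc 1 n) → Prop)
    (f : Finpartition (Finset.Icc 1 n) → ℤ) :
    ∑ᶠ τ ∈ {τ : Finpartition (Finset.Icc 1 n) | IsNoncrossing τ ∧ q τ}, f τ
      = ∑ τ : {P : Finpartition (Finset.Icc 1 n) // IsNoncrossing P},
          (if q τ.1 then f τ.1 else 0) := by
  classical
  have h1 : {τ : Finpartition (Finset.Icc 1 n) | IsNoncrossing τ ∧ q τ}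
      = ↑(Finset.univ.filter (fun τ => IsNoncrossing τ ∧ q τ)) := by
    ext τ; simp
  rw [h1, finsum_mem_coe_finset, ← Finset.filter_filter, Finset.sum_filter,
    Finset.sum_subtype (Finset.univ.filter (fun τ => IsNoncrossing τ))
      (p := IsNoncrossing) (by simp) (fun τ => if q τ then f τ else 0)]

end KW

abbrev NCP (n : ℕ) := {P : Finpartition (Finset.Icc 1 n) // IsNoncrossing P}


set_option maxHeartbeats 2000000 in
/-- in the poset `NC_n` of noncrossing partitions of `{1,…,n}`
ordered by refinement, with Möbius function `μ`, bottom element `bot`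
(the partition into singletons) and top element `top` (the one-block partition),
one has `μ(0̂, π) = μ(π^c, 1̂)` for every noncrossing `π`, where `πc` is the
Kreweras complement of `π`. -/
theorem stmt4 (n : ℕ) (hn : 1 ≤ n)
    (μ : Finpartition (Finset.Icc 1 n) → Finpartition (Finset.Icc 1 n) → ℤ)
    (hrefl : ∀ π, IsNoncrossing π → μ π π = 1)
    (hsum : ∀ σ π, IsNoncrossing σ → IsNoncrossing π → refines σ π → σ ≠ π →
      ∑ᶠ τ ∈ {τ : Finpartition (Finset.Icc 1 n) |
        IsNoncrossing τ ∧ refines σ τ ∧ refines τ π}, μ σ τ = 0)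
    (π πc bot top : Finpartition (Finset.Icc 1 n))
    (hπ : IsNoncrossing π)
    (hπc : ∀ i ∈ Finset.Icc 1 n, ∀ j ∈ Finset.Icc 1 n, (sameBlock πc i j ↔ krewRel π i j))
    (hbot : bot.parts = (Finset.Icc 1 n).image (fun i => {i}))
    (htop : top.parts = {Finset.Icc 1 n}) :
    μ bot π = μ πc top := by
  classical
  have nbot : IsNoncrossing bot := KW.nc_bot hbot
  have ntop : IsNoncrossing top := KW.nc_top htop
  -- the incidence matrices
  have hMZ : (Matrix.of fun x y : NCP n => if x.1 ≤ y.1 then μ x.1 y.1 else 0) *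
      (Matrix.of fun x y : NCP n => if x.1 ≤ y.1 then (1 : ℤ) else 0) = 1 := by
    ext x y
    rw [Matrix.mul_apply, Matrix.one_apply]
    simp only [Matrix.of_apply]
    have hterm : ∀ τ : NCP n,
        (if x.1 ≤ τ.1 then μ x.1 τ.1 else 0) * (if τ.1 ≤ y.1 then (1 : ℤ) else 0)
          = if x.1 ≤ τ.1 ∧ τ.1 ≤ y.1 then μ x.1 τ.1 else 0 := by
      intro τ
      by_cases h1 : x.1 ≤ τ.1 <;> by_cases h2 : τ.1 ≤ y.1 <;> simp [h1, h2]
    rw [Finset.sum_congr rfl (fun τ _ => hterm τ)]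
    by_cases hxy : x = y
    · subst hxy
      rw [if_pos rfl, Finset.sum_eq_single x]
      · rw [if_pos ⟨le_rfl, le_rfl⟩]
        exact hrefl x.1 x.2
      · intro τ _ hne
        rw [if_neg]
        rintro ⟨h1, h2⟩
        exact hne (Subtype.ext (le_antisymm h2 h1))
      · intro h; exact absurd (Finset.mem_univ x) h
    · rw [if_neg hxy]
      by_cases hle : x.1 ≤ y.1
      · have h0 := hsum x.1 y.1 x.2 y.2 hle (fun he => hxy (Subtype.ext he))
        rw [KW.finsum_eq_subtype_sum (fun τ => refines x.1 τ ∧ refines τ y.1)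
          (fun τ => μ x.1 τ)] at h0
        simp only [KW.refines_iff_le] at h0
        exact h0
      · apply Finset.sum_eq_zero
        intro τ _
        rw [if_neg]
        rintro ⟨h1, h2⟩
        exact hle (h1.trans h2)
  have hZM := mul_eq_one_comm.mp hMZ
  have dual : ∀ x y : NCP n, x ≠ y →
      (∑ ρ : NCP n, if x.1 ≤ ρ.1 ∧ ρ.1 ≤ y.1 then μ ρ.1 y.1 else 0) = 0 := by
    intro x y hne
    have e2 : ((Matrix.of fun x y : NCP n => if x.1 ≤ y.1 then (1 : ℤ) else 0) *
        (Matrix.of fun x y : NCP n => if x.1 ≤ y.1 then μ x.1 y.1 else 0)) x y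
        = (1 : Matrix (NCP n) (NCP n) ℤ) x y := by rw [hZM]
    rw [Matrix.mul_apply, Matrix.one_apply, if_neg hne] at e2
    simp only [Matrix.of_apply] at e2
    refine Eq.trans (Finset.sum_congr rfl fun τ _ => ?_) e2
    by_cases h1 : x.1 ≤ τ.1 <;> by_cases h2 : τ.1 ≤ y.1 <;> simp [h1, h2]
  -- well-founded induction
  have wf : WellFounded ((· < ·) : NCP n → NCP n → Prop) := IsWellFounded.wf
  have main : ∀ τ : NCP n, μ bot τ.1 = μ (KW.Kmap τ.1) top := by
    intro τ₀
    refine wf.induction (C := fun τ => μ bot τ.1 = μ (KW.Kmap τ.1) top) τ₀ ?_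
    intro τ IH
    by_cases hb : τ.1 = bot
    · rw [hb, KW.Kmap_bot hbot htop, hrefl bot nbot, hrefl top ntop]
    · have E1 : (∑ ρ : NCP n, if refines bot ρ.1 ∧ refines ρ.1 τ.1 then μ bot ρ.1 else 0)
          = 0 := by
        have h0 := hsum bot τ.1 nbot τ.2 (KW.bot_le_all hbot τ.1) (fun he => hb he.symm)
        rw [KW.finsum_eq_subtype_sum] at h0
        simpa only [KW.refines_iff_le] using h0
      have E1' : (∑ ρ : NCP n, if ρ.1 ≤ τ.1 then μ bot ρ.1 else 0) = 0 := by
        refine Eq.trans (Finset.sum_congr rfl fun ρ _ => ?_) E1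
        by_cases h : ρ.1 ≤ τ.1
        · rw [if_pos h, if_pos ⟨KW.bot_le_all hbot ρ.1, h⟩]
        · rw [if_neg h, if_neg]
          rintro ⟨_, hh⟩
          exact h hh
      have hKne : (⟨KW.Kmap τ.1, KW.Kmap_noncrossing τ.1⟩ : NCP n) ≠ ⟨top, ntop⟩ := by
        intro he
        apply hb
        have h1 : KW.Kmap τ.1 = top := congrArg Subtype.val he
        have h2 := congrArg KW.KmapI h1
        rwa [KW.KmapI_Kmap τ.2, KW.KmapI_top hn hbot htop] at h2
      have E2 := dual ⟨KW.Kmap τ.1, KW.Kmap_noncrossing τ.1⟩ ⟨top, ntop⟩ hKne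
      have E2' : (∑ ρ : NCP n, if KW.Kmap τ.1 ≤ ρ.1 then μ ρ.1 top else 0) = 0 := by
        refine Eq.trans (Finset.sum_congr rfl fun ρ _ => ?_) E2
        by_cases h : KW.Kmap τ.1 ≤ ρ.1
        · rw [if_pos h, if_pos ⟨h, KW.all_le_top htop ρ.1⟩]
        · rw [if_neg h, if_neg]
          rintro ⟨hh, _⟩
          exact h hh
      have S1 := Finset.add_sum_erase Finset.univ
        (fun ρ : NCP n => if ρ.1 ≤ τ.1 then μ bot ρ.1 else 0) (Finset.mem_univ τ)
      have S2 := Finset.add_sum_erase Finset.univ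
        (fun ρ : NCP n => if KW.Kmap τ.1 ≤ ρ.1 then μ ρ.1 top else 0)
        (Finset.mem_univ (⟨KW.Kmap τ.1, KW.Kmap_noncrossing τ.1⟩ : NCP n))
      simp only [if_pos (le_refl τ.1), if_pos (le_refl (KW.Kmap τ.1))] at S1 S2
      have hrest : (∑ ρ ∈ Finset.univ.erase τ, if ρ.1 ≤ τ.1 then μ bot ρ.1 else 0)
          = ∑ ρ ∈ Finset.univ.erase (⟨KW.Kmap τ.1, KW.Kmap_noncrossing τ.1⟩ : NCP n),
              if KW.Kmap τ.1 ≤ ρ.1 then μ ρ.1 top else 0 := by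
        refine Finset.sum_nbij'
          (i := fun ρ : NCP n => (⟨KW.Kmap ρ.1, KW.Kmap_noncrossing ρ.1⟩ : NCP n))
          (j := fun ρ : NCP n => (⟨KW.KmapI ρ.1, KW.KmapI_noncrossing ρ.1⟩ : NCP n))
          ?_ ?_ ?_ ?_ ?_
        · intro ρ hρ
          rw [Finset.mem_erase] at hρ ⊢
          refine ⟨?_, Finset.mem_univ _⟩
          intro he
          apply hρ.1
          have h1 : KW.Kmap ρ.1 = KW.Kmap τ.1 := congrArg Subtype.val he
          have h2 := congrArg KW.KmapI h1
          rw [KW.KmapI_Kmap ρ.2, KW.KmapI_Kmap τ.2] at h2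
          exact Subtype.ext h2
        · intro ρ hρ
          rw [Finset.mem_erase] at hρ ⊢
          refine ⟨?_, Finset.mem_univ _⟩
          intro he
          apply hρ.1
          have h1 : KW.KmapI ρ.1 = τ.1 := congrArg Subtype.val he
          have h2 := congrArg KW.Kmap h1
          rw [KW.Kmap_KmapI ρ.2] at h2
          exact Subtype.ext h2
        · intro ρ _
          exact Subtype.ext (KW.KmapI_Kmap ρ.2)
        · intro ρ _
          exact Subtype.ext (KW.Kmap_KmapI ρ.2)
        · intro ρ hρ
          rw [Finset.mem_erase] at hρ
          by_cases h : ρ.1 ≤ τ.1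
          · rw [if_pos h, if_pos (KW.Kmap_antitone h)]
            have hlt : ρ < τ := lt_of_le_of_ne h hρ.1
            exact IH ρ hlt
          · rw [if_neg h, if_neg]
            intro hk
            apply h
            have := KW.KmapI_antitone hk
            rwa [KW.KmapI_Kmap ρ.2, KW.KmapI_Kmap τ.2] at this
      rw [← S1, hrest] at E1'
      rw [← S2] at E2'
      linarith
  have hπceq : πc = KW.Kmap π := by
    refine KW.eq_of_sameBlock ?_
    intro i hi j hj
    rw [KW.sameBlock_Kmap, hπc i hi j hj]
    constructor
    · intro h; exact ⟨hi, hj, h⟩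
    · rintro ⟨_, _, h⟩; exact h
  rw [hπceq]
  exact main ⟨π, hπ⟩
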